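/- Let M, N be positive integers, let M_s, N_s be integers with S a subset of {1,...,M} of size M_s and T a subset of {1,...,N} of size N_s, and suppose 2N_s ≠ N. Let L > 0 be a real number and let α_1,...,α_M and θ_1,...,θ_N be real phases. Define RIS phases φ_n = θ_n for n ∈ T and φ_n = θ_n + π otherwise, the cascaded channel h ∈ ℂ^M by h_m = √L · e^{iα_m} · Σ_{n=1}^N e^{i(φ_n − θ_n)}, and the beamformer w ∈ ℂ^M by w_m = (h_m / ‖h‖) · a_m where a_m = 1 if m ∈ S and a_m = −1 otherwise (‖h‖ is the Euclidean norm of h, which is nonzero). Then |Σ_{m=1}^M conj(h_m) · w_m|² = L · (2M_s − M)² · (2N_s − N)² / M. -/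

import Mathlib

open Finset Complex Real

/-- Lemma 1 (received SNR at Bob with RIBES): the received signal power equals
`L · (2Mₛ − M)² · (2Nₛ − N)² / M`. -/
theorem stmt_0 (M N : ℕ) (hM : 0 < M) (hN : 0 < N)
    (Ms Ns : ℕ) (S T : Finset ℕ)
    (hS : S ⊆ Finset.Icc 1 M) (hScard : S.card = Ms)
    (hT : T ⊆ Finset.Icc 1 N) (hTcard : T.card = Ns)
    (hNs : 2 * Ns ≠ N)
    (L : ℝ) (hL : 0 < L)
    (α θ : ℕ → ℝ) :
    let φ : ℕ → ℝ := fun n => if n ∈ T then θ n else θ n + Real.pi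
    let h : ℕ → ℂ := fun m => (Real.sqrt L : ℂ) * Complex.exp (Complex.I * (α m)) *
        ∑ n ∈ Finset.Icc 1 N, Complex.exp (Complex.I * ((φ n - θ n : ℝ) : ℂ))
    let hnorm : ℝ := Real.sqrt (∑ m ∈ Finset.Icc 1 M, ‖h m‖ ^ 2)
    let a : ℕ → ℂ := fun m => if m ∈ S then 1 else -1
    let w : ℕ → ℂ := fun m => (h m / (hnorm : ℂ)) * a m
    ‖∑ m ∈ Finset.Icc 1 M, (starRingEnd ℂ) (h m) * w m‖ ^ 2
      = L * (2 * (Ms : ℝ) - M) ^ 2 * (2 * (Ns : ℝ) - N) ^ 2 / M := by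
  intro φ h hnorm a w
  have hNsN : Ns ≤ N := by
    rw [← hTcard]
    calc T.card ≤ (Finset.Icc 1 N).card := Finset.card_le_card hT
      _ = N := by simp
  have hMsM : Ms ≤ M := by
    rw [← hScard]
    calc S.card ≤ (Finset.Icc 1 M).card := Finset.card_le_card hS
      _ = M := by simp
  set c : ℝ := 2 * (Ns : ℝ) - N with hc
  have hc0 : c ≠ 0 := by
    intro h0
    apply hNs
    have : (2 * Ns : ℝ) = N := by linarith [h0]
    exact_mod_cast this
  have hterm : ∀ n, Complex.exp (Complex.I * ((φ n - θ n : ℝ) : ℂ)) = if n ∈ T then 1 else -1 := by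
    intro n
    by_cases hn : n ∈ T
    · simp [φ, hn]
    · simp only [φ, hn, if_false]
      have e : ((θ n + Real.pi - θ n : ℝ) : ℂ) = Real.pi := by push_cast; ring
      rw [e, mul_comm, Complex.exp_pi_mul_I]
  have hsumn : ∑ n ∈ Finset.Icc 1 N, Complex.exp (Complex.I * ((φ n - θ n : ℝ) : ℂ)) = (c : ℂ) := by
    rw [Finset.sum_congr rfl (fun n _ => hterm n)]
    rw [← Finset.sum_filter_add_sum_filter_not (Finset.Icc 1 N) (· ∈ T)]
    have h1 : Finset.filter (· ∈ T) (Finset.Icc 1 N) = T := by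
      ext x
      simp only [Finset.mem_filter]
      exact ⟨fun hx => hx.2, fun hx => ⟨hT hx, hx⟩⟩
    have h2 : (Finset.filter (fun n => ¬ n ∈ T) (Finset.Icc 1 N)).card = N - Ns := by
      rw [Finset.filter_not, h1, Finset.card_sdiff_of_subset hT, hTcard, Nat.card_Icc]; omega
    rw [h1]
    have e1 : ∀ x ∈ T, (if x ∈ T then (1:ℂ) else -1) = 1 := fun x hx => if_pos hx
    have e2 : ∀ x ∈ Finset.filter (fun n => ¬ n ∈ T) (Finset.Icc 1 N),
        (if x ∈ T then (1:ℂ) else -1) = -1 := by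
      intro x hx
      simp only [Finset.mem_filter] at hx
      exact if_neg hx.2
    rw [Finset.sum_congr rfl e1, Finset.sum_congr rfl e2]
    simp only [Finset.sum_const, h2, hTcard, nsmul_eq_mul, mul_one, mul_neg]
    have e3 : ((N - Ns : ℕ) : ℂ) = (N : ℂ) - Ns := by push_cast [hNsN]; ring
    rw [e3, hc]
    push_cast; ring
  have hh : ∀ m, h m = (Real.sqrt L : ℂ) * Complex.exp (Complex.I * (α m)) * (c : ℂ) := by
    intro m; simp only [h, hsumn]
  have habs2 : ∀ m, ‖h m‖ ^ 2 = L * c ^ 2 := by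
    intro m
    rw [hh m, norm_mul, norm_mul, Complex.norm_exp]
    have e : (Complex.I * (α m : ℂ)).re = 0 := by simp
    rw [e, Real.exp_zero, Complex.norm_real, Complex.norm_real, Real.norm_eq_abs, Real.norm_eq_abs,
      _root_.abs_of_nonneg (Real.sqrt_nonneg L), mul_one, mul_pow, Real.sq_sqrt hL.le, _root_.sq_abs]
  have hnormval : hnorm = Real.sqrt (M * (L * c ^ 2)) := by
    simp only [hnorm]
    congr 1
    rw [Finset.sum_congr rfl (fun m _ => habs2 m)]
    simp
  have hnormpos : 0 < hnorm := by
    rw [hnormval]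
    apply Real.sqrt_pos.mpr
    have : (0:ℝ) < M := Nat.cast_pos.mpr hM
    positivity
  have hsum_a : ∑ m ∈ Finset.Icc 1 M, a m = ((2 * (Ms:ℝ) - M : ℝ) : ℂ) := by
    rw [← Finset.sum_filter_add_sum_filter_not (Finset.Icc 1 M) (· ∈ S)]
    have h1 : Finset.filter (· ∈ S) (Finset.Icc 1 M) = S := by
      ext x
      simp only [Finset.mem_filter]
      exact ⟨fun hx => hx.2, fun hx => ⟨hS hx, hx⟩⟩
    have h2 : (Finset.filter (fun n => ¬ n ∈ S) (Finset.Icc 1 M)).card = M - Ms := by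
      rw [Finset.filter_not, h1, Finset.card_sdiff_of_subset hS, hScard, Nat.card_Icc]; omega
    rw [h1]
    have e1 : ∀ x ∈ S, a x = 1 := fun x hx => if_pos hx
    have e2 : ∀ x ∈ Finset.filter (fun n => ¬ n ∈ S) (Finset.Icc 1 M), a x = -1 := by
      intro x hx
      simp only [Finset.mem_filter] at hx
      exact if_neg hx.2
    rw [Finset.sum_congr rfl e1, Finset.sum_congr rfl e2]
    simp only [Finset.sum_const, h2, hScard, nsmul_eq_mul, mul_one, mul_neg]
    have e3 : ((M - Ms : ℕ) : ℂ) = (M : ℂ) - Ms := by push_cast [hMsM]; ring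
    rw [e3]
    push_cast; ring
  have hterm_m : ∀ m, (starRingEnd ℂ) (h m) * w m = ((L * c ^ 2 / hnorm : ℝ) : ℂ) * a m := by
    intro m
    simp only [w]
    have e : (starRingEnd ℂ) (h m) * h m = ((L * c ^ 2 : ℝ) : ℂ) := by
      rw [← habs2 m, ← Complex.normSq_eq_norm_sq]
      exact_mod_cast (Complex.normSq_eq_conj_mul_self).symm
    calc (starRingEnd ℂ) (h m) * (h m / (hnorm:ℂ) * a m)
        = ((starRingEnd ℂ) (h m) * h m) / (hnorm:ℂ) * a m := by ring
      _ = ((L * c ^ 2 / hnorm : ℝ) : ℂ) * a m := by rw [e]; push_cast; ring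
  rw [Finset.sum_congr rfl (fun m _ => hterm_m m), ← Finset.mul_sum, hsum_a,
    ← Complex.ofReal_mul, Complex.norm_real, Real.norm_eq_abs, _root_.sq_abs]
  have hM' : (0:ℝ) < M := Nat.cast_pos.mpr hM
  have hsq : hnorm ^ 2 = M * (L * c ^ 2) := by
    rw [hnormval]
    rw [Real.sq_sqrt]
    positivity
  rw [div_mul_eq_mul_div, div_pow, hsq, hc]
  field_simp
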